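/- (Achievability of finite-length SPIR capacity.) For all integers K ≥ 2, N ≥ 2 and every finite message length L ≥ 1, there exists a zero-error SPIR scheme with messages of exactly L bits, total download D = ⌈L·N/(N−1)⌉ bits, and common randomness entropy H(S) = ⌈L/(N−1)⌉ bits; hence the rate L/⌈L/(1 − 1/N)⌉ is achievable with zero error at finite length L. -/

import Mathlib

open Finset

attribute [local instance] Classical.propDecidable

/-- Probability that the random variable `X` takes the value `a`, on a finite
sample space `Ω` with probability mass function `p`. -/
noncomputable def prob {Ω α : Type*} [Fintype Ω] (p : Ω → ℝ) (X : Ω → α) (a : α) : ℝ :=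
  ∑ ω : Ω, if X ω = a then p ω else 0

/-- Shannon entropy (in bits) of the random variable `X`. -/
noncomputable def ent {Ω α : Type*} [Fintype Ω] [Fintype α] (p : Ω → ℝ) (X : Ω → α) : ℝ :=
  - ∑ a : α, prob p X a * Real.logb 2 (prob p X a)

/-- Conditional Shannon entropy (in bits) `H(X | Y)`. -/
noncomputable def condEnt {Ω α β : Type*} [Fintype Ω] [Fintype α] [Fintype β]
    (p : Ω → ℝ) (X : Ω → α) (Y : Ω → β) : ℝ :=
  ent p (fun ω => (X ω, Y ω)) - ent p Y

/-- Shannon mutual information (in bits) `I(X ; Y)`. -/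
noncomputable def mutInfo {Ω α β : Type*} [Fintype Ω] [Fintype α] [Fintype β]
    (p : Ω → ℝ) (X : Ω → α) (Y : Ω → β) : ℝ :=
  ent p X + ent p Y - ent p (fun ω => (X ω, Y ω))

/-- `X` and `Y` are identically distributed. -/
def IdentDist {Ω α : Type*} [Fintype Ω] (p : Ω → ℝ) (X Y : Ω → α) : Prop :=
  ∀ a : α, prob p X a = prob p Y a

/-- `X` is uniformly distributed on `α`. -/
def Unif {Ω α : Type*} [Fintype Ω] [Fintype α] (p : Ω → ℝ) (X : Ω → α) : Prop :=
  ∀ a : α, prob p X a = 1 / (Fintype.card α : ℝ)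

/-- A zero-error SPIR scheme with `K` messages and `N` databases in which the answer of
database `n` consists of `d n` bits (so the total download is `D = ∑ n, d n` bits). -/
structure FinLenSPIR (K N L : ℕ) (d : Fin N → ℕ) where
  /-- the finite sample space -/
  Ω : Type
  [instΩ : Fintype Ω]
  /-- the probability mass function -/
  p : Ω → ℝ
  p_nonneg : ∀ ω, 0 ≤ p ω
  p_sum : ∑ ω : Ω, p ω = 1
  /-- value type of the common randomness -/
  𝓢 : Type
  [inst𝓢 : Fintype 𝓢]
  /-- value type of the user randomness -/
  𝓕 : Type
  [inst𝓕 : Fintype 𝓕]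
  /-- value types of the queries -/
  𝓠 : Fin N → Type
  [inst𝓠 : ∀ n, Fintype (𝓠 n)]
  /-- the messages -/
  W : ∀ k : Fin K, Ω → (Fin (L) → ZMod 2)
  /-- the common randomness -/
  S : Ω → 𝓢
  /-- the user randomness -/
  F : Ω → 𝓕
  /-- the queries -/
  Q : ∀ (_ : Fin K) (n : Fin N), Ω → 𝓠 n
  /-- the answers: `d n` bits from database `n` -/
  A : ∀ (_ : Fin K) (n : Fin N), Ω → (Fin (d n) → ZMod 2)
  /-- each message is uniformly distributed on the set of bit strings of its length -/
  hWunif : ∀ k, Unif p (W k)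
  /-- the messages, the common randomness and the user randomness are mutually
  independent -/
  hIndep : ∀ (w : ∀ k : Fin K, Fin (L) → ZMod 2) (s : 𝓢) (f : 𝓕),
    prob p (fun ω => ((fun k => W k ω), S ω, F ω)) (w, s, f)
      = (∏ k, prob p (W k) (w k)) * prob p S s * prob p F f
  /-- each query is a deterministic function of `F` -/
  hQ : ∀ k n, ∃ g : 𝓕 → 𝓠 n, ∀ ω, Q k n ω = g (F ω)
  /-- each answer is a deterministic function of the query, the messages and `S` -/
  hA : ∀ k n, ∃ g : 𝓠 n → (∀ k : Fin K, Fin (L) → ZMod 2) → 𝓢 → (Fin (d n) → ZMod 2),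
    ∀ ω, A k n ω = g (Q k n ω) (fun j => W j ω) (S ω)
  /-- correctness: `W_k` is a deterministic function of the answers and `F` -/
  hCorrect : ∀ k, ∃ g : (∀ n, Fin (d n) → ZMod 2) → 𝓕 → (Fin (L) → ZMod 2),
    ∀ ω, W k ω = g (fun n => A k n ω) (F ω)
  /-- user-privacy -/
  hUserPriv : ∀ (n : Fin N) (k k' : Fin K),
    IdentDist p (fun ω => (Q k n ω, A k n ω, (fun j => W j ω), S ω))
                (fun ω => (Q k' n ω, A k' n ω, (fun j => W j ω), S ω))
  /-- database-privacy -/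
  hDBPriv : ∀ k : Fin K,
    mutInfo p (fun ω => (fun j : {j : Fin K // j ≠ k} => W j.1 ω))
      (fun ω => ((fun n => Q k n ω), (fun n => A k n ω), F ω)) = 0

attribute [instance] FinLenSPIR.instΩ FinLenSPIR.inst𝓢 FinLenSPIR.inst𝓕 FinLenSPIR.inst𝓠


set_option linter.unusedSectionVars false

namespace SPIRAux

variable {Ω α β γ δ : Type*} [Fintype Ω] [Fintype α] [Fintype β] [Fintype γ] [Fintype δ]

lemma sum_prob (p : Ω → ℝ) (X : Ω → α) : ∑ a : α, prob p X a = ∑ ω : Ω, p ω := by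
  unfold prob
  rw [Finset.sum_comm]
  refine Finset.sum_congr rfl fun ω _ => ?_
  rw [Finset.sum_ite_eq univ (X ω) (fun _ => p ω), if_pos (mem_univ _)]

lemma prob_map (p : Ω → ℝ) (Z : Ω → γ) (φ : γ → δ) (y : δ) :
    prob p (fun ω => φ (Z ω)) y = ∑ z : γ, if φ z = y then prob p Z z else 0 := by
  unfold prob
  have : ∀ z : γ, (if φ z = y then ∑ ω : Ω, (if Z ω = z then p ω else 0) else 0)
      = ∑ ω : Ω, if Z ω = z then (if φ z = y then p ω else 0) else 0 := by
    intro z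
    split_ifs with h
    · rfl
    · simp [h]
  simp_rw [this]
  rw [Finset.sum_comm]
  refine Finset.sum_congr rfl fun ω _ => ?_
  rw [Finset.sum_eq_single (Z ω)]
  · simp
  · intro z _ hz
    exact if_neg (fun hh => hz hh.symm)
  · simp

lemma prob_equiv (e : Ω ≃ α) (X : Ω → α) (hX : ∀ ω, X ω = e ω) (a : α) :
    prob (fun _ => ((Fintype.card Ω : ℝ))⁻¹) X a = ((Fintype.card Ω : ℝ))⁻¹ := by
  unfold prob
  simp_rw [hX]
  rw [Equiv.sum_comp e (fun x => if x = a then ((Fintype.card Ω : ℝ))⁻¹ else 0)]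
  rw [Finset.sum_ite_eq' univ a (fun _ => ((Fintype.card Ω : ℝ))⁻¹), if_pos (mem_univ _)]

lemma prob_fst [Nonempty Ω] (e : Ω ≃ α × γ) (X : Ω → α) (hX : ∀ ω, X ω = (e ω).1) (a : α) :
    prob (fun _ => ((Fintype.card Ω : ℝ))⁻¹) X a = ((Fintype.card α : ℝ))⁻¹ := by
  unfold prob
  simp_rw [hX]
  rw [Equiv.sum_comp e (fun x => if x.1 = a then ((Fintype.card Ω : ℝ))⁻¹ else 0)]
  rw [Fintype.sum_prod_type]
  have h1 : ∀ x : α, (∑ y : γ, if ((x, y) : α × γ).1 = a then ((Fintype.card Ω : ℝ))⁻¹ else 0)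
      = (Fintype.card γ : ℝ) * (if x = a then ((Fintype.card Ω : ℝ))⁻¹ else 0) := by
    intro x
    have he : (∑ y : γ, if ((x, y) : α × γ).1 = a then ((Fintype.card Ω : ℝ))⁻¹ else 0)
        = (∑ _y : γ, if x = a then ((Fintype.card Ω : ℝ))⁻¹ else 0) := rfl
    rw [he, Finset.sum_const, Finset.card_univ, nsmul_eq_mul]
  simp_rw [h1]
  rw [← Finset.mul_sum]
  have hcard : Fintype.card Ω = Fintype.card α * Fintype.card γ := by
    rw [Fintype.card_congr e, Fintype.card_prod]
  obtain ⟨hne1, hne2⟩ := nonempty_prod.mp (Nonempty.map e ‹Nonempty Ω›)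
  have hγ : (0:ℕ) < Fintype.card γ := @Fintype.card_pos _ _ hne2
  have hα : (0:ℕ) < Fintype.card α := @Fintype.card_pos _ _ hne1
  rw [Finset.sum_ite_eq' univ a (fun _ => ((Fintype.card Ω : ℝ))⁻¹), if_pos (mem_univ _)]
  rw [hcard]
  push_cast
  field_simp

lemma indep_map (p : Ω → ℝ) (X : Ω → α) (Z : Ω → γ) (φ : γ → δ)
    (hfact : ∀ x z, prob p (fun ω => (X ω, Z ω)) (x, z) = prob p X x * prob p Z z)
    (x : α) (y : δ) :
    prob p (fun ω => (X ω, φ (Z ω))) (x, y)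
      = prob p X x * prob p (fun ω => φ (Z ω)) y := by
  have h0 := prob_map p (fun ω => (X ω, Z ω)) (fun q => (q.1, φ q.2)) (x, y)
  refine h0.trans ?_
  rw [Fintype.sum_prod_type]
  have h2 : ∀ x' : α, ∀ z : γ, ((x', φ z) = (x, y)) = (x' = x ∧ φ z = y) := by
    intro x' z; rw [Prod.ext_iff]
  simp_rw [h2, hfact]
  rw [prob_map p Z φ y, Finset.mul_sum]
  rw [Finset.sum_comm]
  refine Finset.sum_congr rfl fun z _ => ?_
  by_cases h : φ z = y
  · simp only [h, and_true, if_pos h]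
    rw [Finset.sum_ite_eq' univ x (fun x' => prob p X x' * prob p Z z), if_pos (mem_univ _)]
    simp
  · simp [h]

lemma mutInfo_eq_zero (p : Ω → ℝ) (hp : ∑ ω : Ω, p ω = 1) (X : Ω → α) (Y : Ω → β)
    (hfact : ∀ x y, prob p (fun ω => (X ω, Y ω)) (x, y) = prob p X x * prob p Y y) :
    mutInfo p X Y = 0 := by
  have hsX : ∑ x : α, prob p X x = 1 := by rw [sum_prob, hp]
  have hsY : ∑ y : β, prob p Y y = 1 := by rw [sum_prob, hp]
  have key : ent p (fun ω => (X ω, Y ω)) = ent p X + ent p Y := by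
    unfold ent
    rw [Fintype.sum_prod_type]
    have hlog : ∀ a b : ℝ, a * b * Real.logb 2 (a * b)
        = (a * Real.logb 2 a) * b + a * (b * Real.logb 2 b) := by
      intro a b
      rcases eq_or_ne a 0 with ha | ha
      · simp [ha]
      rcases eq_or_ne b 0 with hb | hb
      · simp [hb]
      rw [Real.logb_mul ha hb]; ring
    have : ∀ x : α, ∑ y : β, prob p (fun ω => (X ω, Y ω)) (x, y)
          * Real.logb 2 (prob p (fun ω => (X ω, Y ω)) (x, y))
        = (prob p X x * Real.logb 2 (prob p X x)) * (∑ y : β, prob p Y y)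
          + prob p X x * (∑ y : β, prob p Y y * Real.logb 2 (prob p Y y)) := by
      intro x
      rw [Finset.mul_sum, Finset.mul_sum, ← Finset.sum_add_distrib]
      refine Finset.sum_congr rfl fun y _ => ?_
      rw [hfact x y, hlog]
    simp_rw [this]
    rw [Finset.sum_add_distrib]
    have e1 : (∑ x : α, prob p X x * Real.logb 2 (prob p X x) * (∑ y : β, prob p Y y))
        = ∑ x : α, prob p X x * Real.logb 2 (prob p X x) := by
      rw [hsY]; simp
    have e2 : (∑ x : α, prob p X x * (∑ y : β, prob p Y y * Real.logb 2 (prob p Y y)))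
        = ∑ y : β, prob p Y y * Real.logb 2 (prob p Y y) := by
      rw [← Finset.sum_mul, hsX, one_mul]
    rw [e1, e2]
    ring
  unfold mutInfo
  rw [key]; ring

lemma ent_unif [Nonempty α] (p : Ω → ℝ) (X : Ω → α) (h : Unif p X) :
    ent p X = Real.logb 2 (Fintype.card α : ℝ) := by
  unfold ent
  have h' : ∀ a : α, prob p X a = 1 / (Fintype.card α : ℝ) := h
  simp_rw [h', one_div]
  rw [Finset.sum_const, Finset.card_univ, nsmul_eq_mul]
  have hα : (0:ℝ) < (Fintype.card α : ℝ) := by exact_mod_cast Fintype.card_pos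
  rw [Real.logb_inv]
  field_simp

lemma identDist_comp (p : Ω → ℝ) (σ : Ω ≃ Ω) (hp : ∀ ω, p (σ ω) = p ω)
    (X Y : Ω → α) (h : ∀ ω, X (σ ω) = Y ω) : IdentDist p X Y := by
  intro a
  unfold prob
  rw [← Equiv.sum_comp σ (fun ω => if X ω = a then p ω else 0)]
  refine Finset.sum_congr rfl fun ω _ => ?_
  rw [h, hp]

end SPIRAux

namespace SPIRC

/-- number of rounds -/
def Mr (N L : ℕ) : ℕ := (L + (N - 2)) / (N - 1)

/-- bits sent by non-reference server with index r -/
def cfun (N L r : ℕ) : ℕ := (L - r + (N - 2)) / (N - 1)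

/-- total bits of server n -/
def dfun (N L : ℕ) (n : Fin N) : ℕ := if n.val = N - 1 then Mr N L else cfun N L n.val

lemma klt (N L : ℕ) (hN : 2 ≤ N) (i r : ℕ) :
    i < cfun N L r ↔ i * (N - 1) + r < L := by
  unfold cfun
  rw [Nat.lt_iff_add_one_le, Nat.le_div_iff_mul_le (by omega : 0 < N - 1), add_one_mul]
  omega

lemma cfun_le_M (N L r : ℕ) : cfun N L r ≤ Mr N L :=
  Nat.div_le_div_right (by omega)

lemma cfun_zero (N L : ℕ) : cfun N L 0 = Mr N L := by
  unfold cfun Mr; rw [Nat.sub_zero]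

lemma L_le_mul (N L : ℕ) (hN : 2 ≤ N) : L ≤ Mr N L * (N - 1) := by
  by_contra h
  push_neg at h
  have := (klt N L hN (Mr N L) 0).mpr (by omega)
  rw [cfun_zero] at this
  omega

lemma dfun_le_M (N L : ℕ) (n : Fin N) : dfun N L n ≤ Mr N L := by
  unfold dfun
  split
  · exact le_rfl
  · exact cfun_le_M N L n.val

lemma cfun_card (N L : ℕ) (hN : 2 ≤ N) (r : ℕ) (hr : r < N - 1) :
    ((range L).filter (fun ℓ => ℓ % (N - 1) = r)).card = cfun N L r := by
  rw [show cfun N L r = (range (cfun N L r)).card from (Finset.card_range _).symm]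
  apply Finset.card_bij' (fun ℓ _ => ℓ / (N - 1)) (fun i _ => i * (N - 1) + r)
  · intro ℓ hℓ
    simp only [Finset.mem_filter, Finset.mem_range] at hℓ
    rw [Finset.mem_range, klt N L hN]
    have hd := Nat.div_add_mod ℓ (N - 1)
    rw [hℓ.2] at hd
    rw [mul_comm]
    omega
  · intro i hi
    rw [Finset.mem_range] at hi
    rw [klt N L hN] at hi
    simp only [Finset.mem_filter, Finset.mem_range]
    constructor
    · exact hi
    · rw [mul_comm i (N - 1), Nat.mul_add_mod]
      exact Nat.mod_eq_of_lt hr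
  · intro ℓ hℓ
    simp only [Finset.mem_filter, Finset.mem_range] at hℓ
    have hd := Nat.div_add_mod ℓ (N - 1)
    rw [hℓ.2] at hd
    rw [mul_comm]
    omega
  · intro i hi
    rw [mul_comm, Nat.mul_add_div (by omega : 0 < N - 1), Nat.div_eq_of_lt hr]
    omega

lemma sum_dfun (N L : ℕ) (hN : 2 ≤ N) :
    ∑ n : Fin N, dfun N L n = L + Mr N L := by
  have h1 : ∑ n : Fin N, dfun N L n = ∑ r ∈ range N, (if r = N - 1 then Mr N L else cfun N L r) := by
    rw [← Fin.sum_univ_eq_sum_range (fun r => if r = N - 1 then Mr N L else cfun N L r) N]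
    rfl
  rw [h1]
  have h6 := Finset.sum_range_succ (fun r => if r = N - 1 then Mr N L else cfun N L r) (N - 1)
  rw [show N - 1 + 1 = N from by omega] at h6
  rw [h6]
  have h3 : ∀ r ∈ range (N - 1), (if r = N - 1 then Mr N L else cfun N L r) = cfun N L r := by
    intro r hr
    rw [Finset.mem_range] at hr
    rw [if_neg (by omega)]
  have h4 : ∑ r ∈ range (N - 1), cfun N L r = L := by
    have h5 := Finset.card_eq_sum_card_fiberwise
      (f := fun ℓ => ℓ % (N - 1)) (s := range L) (t := range (N - 1))
      (fun ℓ _ => by rw [Finset.mem_coe, Finset.mem_range]; exact Nat.mod_lt _ (by omega))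
    rw [Finset.card_range] at h5
    conv_rhs => rw [h5]
    exact Finset.sum_congr rfl fun r hr => (cfun_card N L hN r (Finset.mem_range.mp hr)).symm
  rw [Finset.sum_congr rfl h3, if_pos rfl, h4]

lemma natCeilDiv (a b : ℕ) (hb : 1 ≤ b) : ⌈(a : ℚ) / (b : ℚ)⌉₊ = (a + b - 1) / b := by
  have hb0 : (0:ℚ) < (b:ℚ) := by exact_mod_cast hb
  apply le_antisymm
  · rw [Nat.ceil_le, div_le_iff₀ hb0]
    have : a ≤ ((a + b - 1) / b) * b := by
      by_contra h
      push_neg at h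
      have h2 : (a + b - 1) / b < (a + b - 1) / b := by
        rw [Nat.lt_iff_add_one_le, Nat.le_div_iff_mul_le (by omega : 0 < b), add_one_mul]
        omega
      omega
    exact_mod_cast this
  · rcases Nat.eq_zero_or_pos ((a + b - 1) / b) with h | h
    · omega
    · have h1 : (a + b - 1) / b - 1 < ⌈(a:ℚ)/(b:ℚ)⌉₊ := by
        rw [Nat.lt_ceil, lt_div_iff₀ hb0]
        have : ((a + b - 1) / b - 1) * b < a := by
          have h2 : (a + b - 1) / b - 1 < (a + b - 1) / b := by omega
          rw [Nat.lt_iff_add_one_le, Nat.le_div_iff_mul_le (by omega : 0 < b), add_one_mul] at h2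
          omega
        exact_mod_cast this
      omega

lemma ceil_L_div (N L : ℕ) (hN : 2 ≤ N) : ⌈(L : ℚ) / ((N : ℚ) - 1)⌉₊ = Mr N L := by
  have h1 : ((N : ℚ) - 1) = ((N - 1 : ℕ) : ℚ) := by
    push_cast [Nat.cast_sub (by omega : 1 ≤ N)]; ring
  rw [h1, natCeilDiv L (N-1) (by omega)]
  unfold Mr
  congr 1
  omega

lemma ceil_LN_div (N L : ℕ) (hN : 2 ≤ N) :
    ⌈(L : ℚ) * (N : ℚ) / ((N : ℚ) - 1)⌉₊ = L + Mr N L := by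
  have hN2 : (2:ℚ) ≤ (N:ℚ) := by exact_mod_cast hN
  have hne : ((N : ℚ) - 1) ≠ 0 := by
    exact sub_ne_zero.mpr (by exact_mod_cast (show N ≠ 1 by omega))
  have h1 : (L : ℚ) * (N : ℚ) / ((N : ℚ) - 1) = (L : ℚ) / ((N : ℚ) - 1) + (L : ℕ) := by
    field_simp
    ring
  have hpos : (0:ℚ) ≤ (L : ℚ) / ((N : ℚ) - 1) := div_nonneg (by positivity) (by linarith)
  rw [h1, Nat.ceil_add_natCast hpos L, ceil_L_div N L hN]
  omega


section Scheme

variable (K N L : ℕ)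

abbrev WTy := Fin K → Fin L → ZMod 2
abbrev STy := Fin (Mr N L) → ZMod 2
abbrev VTy := fun (K L : ℕ) => Fin L → Fin K → ZMod 2

/-- query shift for target message k at server n -/
def sh (k : Fin K) (n : Fin N) : VTy K L :=
  fun ℓ j => if ℓ.val % (N - 1) = n.val ∧ j = k then 1 else 0

/-- per-round inner products -/
def hfun (q : VTy K L) (w : WTy K L) : STy N L :=
  fun m => ∑ ℓ : Fin L, if ℓ.val / (N - 1) = m.val then (∑ j : Fin K, q ℓ j * w j ℓ) else 0

/-- the "extra" contribution of server n in round m, as a function of the desired message -/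
def dlt (n : Fin N) (m : Fin (Mr N L)) (a : Fin L → ZMod 2) : ZMod 2 :=
  ∑ ℓ : Fin L, if ℓ.val / (N - 1) = m.val ∧ ℓ.val % (N - 1) = n.val then a ℓ else 0

lemma hfun_add (q q' : VTy K L) (w : WTy K L) (m : Fin (Mr N L)) :
    hfun K N L (q + q') w m = hfun K N L q w m + hfun K N L q' w m := by
  unfold hfun
  rw [← Finset.sum_add_distrib]
  refine Finset.sum_congr rfl fun ℓ _ => ?_
  split_ifs with h
  · rw [← Finset.sum_add_distrib]
    refine Finset.sum_congr rfl fun j _ => ?_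
    show (q ℓ j + q' ℓ j) * w j ℓ = _
    ring
  · rw [add_zero]

lemma hfun_sh (k : Fin K) (n : Fin N) (w : WTy K L) (m : Fin (Mr N L)) :
    hfun K N L (sh K N L k n) w m = dlt N L n m (w k) := by
  unfold hfun dlt sh
  refine Finset.sum_congr rfl fun ℓ _ => ?_
  have hinner : (∑ j : Fin K, (if ℓ.val % (N - 1) = n.val ∧ j = k then (1:ZMod 2) else 0) * w j ℓ)
      = if ℓ.val % (N - 1) = n.val then w k ℓ else 0 := by
    by_cases h : ℓ.val % (N - 1) = n.val
    · simp only [h, true_and]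
      have : ∀ j : Fin K, (if j = k then (1:ZMod 2) else 0) * w j ℓ
          = if j = k then w j ℓ else 0 := by
        intro j; split_ifs <;> ring
      rw [if_pos trivial]
      calc (∑ j : Fin K, (if j = k then (1:ZMod 2) else 0) * w j ℓ)
          = ∑ j : Fin K, if j = k then w j ℓ else 0 := Finset.sum_congr rfl fun j _ => this j
        _ = w k ℓ := by
            rw [Finset.sum_ite_eq' univ k (fun j => w j ℓ), if_pos (mem_univ _)]
    · rw [if_neg h]
      refine Finset.sum_eq_zero fun j _ => ?_
      rw [if_neg (by tauto), zero_mul]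
  rw [hinner]
  by_cases h1 : ℓ.val / (N - 1) = m.val <;> by_cases h2 : ℓ.val % (N - 1) = n.val <;>
    simp [h1, h2]

lemma dlt_ref (hN : 2 ≤ N) (n : Fin N) (hn : n.val = N - 1) (m : Fin (Mr N L))
    (a : Fin L → ZMod 2) : dlt N L n m a = 0 := by
  unfold dlt
  refine Finset.sum_eq_zero fun ℓ _ => ?_
  rw [if_neg]
  rintro ⟨-, h2⟩
  have := Nat.mod_lt ℓ.val (show 0 < N - 1 by omega)
  omega

lemma dlt_pos (n : Fin N) (m : Fin (Mr N L)) (a : Fin L → ZMod 2)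
    (hn : n.val < N - 1) (hpos : m.val * (N - 1) + n.val < L) :
    dlt N L n m a = a ⟨m.val * (N - 1) + n.val, hpos⟩ := by
  unfold dlt
  have hco : ∀ ℓ : Fin L, (ℓ.val / (N - 1) = m.val ∧ ℓ.val % (N - 1) = n.val)
      ↔ ℓ = ⟨m.val * (N - 1) + n.val, hpos⟩ := by
    intro ℓ
    rw [Fin.ext_iff]
    constructor
    · rintro ⟨h1, h2⟩
      have hd := Nat.div_add_mod ℓ.val (N - 1)
      rw [h1, h2] at hd
      show ℓ.val = m.val * (N - 1) + n.val
      rw [mul_comm]; omega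
    · intro h
      show _ ∧ _
      have h1 : ℓ.val = n.val + m.val * (N - 1) := by rw [h]; ring
      constructor
      · rw [h1, Nat.add_mul_div_right _ _ (show 0 < N - 1 by omega),
          Nat.div_eq_of_lt hn, zero_add]
      · rw [h1, Nat.add_mul_mod_self_right, Nat.mod_eq_of_lt hn]
  simp only [hco]
  rw [Finset.sum_ite_eq' univ _ a, if_pos (mem_univ _)]

/-- the answer function of server n -/
def ansF (n : Fin N) (q : VTy K L) (w : WTy K L) (s : STy N L) :
    Fin (dfun N L n) → ZMod 2 :=
  fun i => s ⟨i.val, lt_of_lt_of_le i.isLt (dfun_le_M N L n)⟩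
    + hfun K N L q w ⟨i.val, lt_of_lt_of_le i.isLt (dfun_le_M N L n)⟩

/-- reassembling a family of messages from the k-th one and the others -/
def recomb (k : Fin K) (a : Fin L → ZMod 2) (x : {j : Fin K // j ≠ k} → Fin L → ZMod 2) :
    WTy K L :=
  fun j => if h : j = k then a else x ⟨j, h⟩

lemma recomb_self (k : Fin K) (w : WTy K L) :
    recomb K L k (w k) (fun j => w j.1) = w := by
  funext j
  unfold recomb
  split_ifs with h
  · rw [h]
  · rfl

lemma addSelf (x : ZMod 2) : x + x = 0 := CharTwo.add_self_eq_zero x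

end Scheme


section Equivs

variable (K N L : ℕ)

lemma zswap (x a b : ZMod 2) : x + (a + b) + a = x + b := by
  have h : x + (a + b) + a = (x + b) + (a + a) := by ring
  rw [h, addSelf, add_zero]

lemma zfin (x y z : ZMod 2) : (y + (z + x)) + (y + (z + 0)) = x := by
  have h1 : (y + (z + x)) + (y + (z + 0)) = x + ((y + y) + (z + z)) := by ring
  rw [h1, addSelf, addSelf, add_zero, add_zero]

abbrev OmT := WTy K L × STy N L × VTy K L

noncomputable def pU : OmT K N L → ℝ := fun _ => ((Fintype.card (OmT K N L) : ℝ))⁻¹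

/-- splitting off message k -/
def eW (k : Fin K) : OmT K N L ≃
    ((Fin L → ZMod 2) × (({j : Fin K // j ≠ k} → Fin L → ZMod 2) × STy N L × VTy K L)) where
  toFun ω := (ω.1 k, ((fun j => ω.1 j.1), ω.2))
  invFun q := (recomb K L k q.1 q.2.1, q.2.2)
  left_inv ω := by
    show (recomb K L k (ω.1 k) (fun j => ω.1 j.1), ω.2) = ω
    rw [recomb_self]
  right_inv q := by
    show (recomb K L k q.1 q.2.1 k, ((fun j => recomb K L k q.1 q.2.1 j.1), q.2.2)) = q
    have h1 : recomb K L k q.1 q.2.1 k = q.1 := dif_pos rfl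
    have h2 : (fun j : {j : Fin K // j ≠ k} => recomb K L k q.1 q.2.1 j.1) = q.2.1 := by
      funext j
      exact dif_neg j.2
    rw [h1, h2]

def eS : OmT K N L ≃ STy N L × (WTy K L × VTy K L) where
  toFun ω := (ω.2.1, ω.1, ω.2.2)
  invFun q := (q.2.1, q.1, q.2.2)
  left_inv _ := rfl
  right_inv _ := rfl

def eF : OmT K N L ≃ VTy K L × (WTy K L × STy N L) where
  toFun ω := (ω.2.2, ω.1, ω.2.1)
  invFun q := (q.2.1, q.2.2, q.1)
  left_inv _ := rfl
  right_inv _ := rfl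

/-- view of the sample space used in database privacy -/
def eZ (k : Fin K) : OmT K N L ≃
    (({j : Fin K // j ≠ k} → Fin L → ZMod 2)
      × (VTy K L × (Fin L → ZMod 2) × STy N L)) where
  toFun ω := ((fun j => ω.1 j.1),
    (ω.2.2, ω.1 k, fun m => ω.2.1 m + hfun K N L ω.2.2 ω.1 m))
  invFun q := (recomb K L k q.2.2.1 q.1,
    (fun m => q.2.2.2 m + hfun K N L q.2.1 (recomb K L k q.2.2.1 q.1) m), q.2.1)
  left_inv ω := by
    show (recomb K L k (ω.1 k) (fun j => ω.1 j.1),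
      (fun m => (ω.2.1 m + hfun K N L ω.2.2 ω.1 m)
        + hfun K N L ω.2.2 (recomb K L k (ω.1 k) (fun j => ω.1 j.1)) m), ω.2.2) = ω
    rw [recomb_self]
    have h3 : (fun m => (ω.2.1 m + hfun K N L ω.2.2 ω.1 m) + hfun K N L ω.2.2 ω.1 m)
        = ω.2.1 := by
      funext m
      rw [add_assoc, addSelf, add_zero]
    rw [h3]
  right_inv q := by
    obtain ⟨x, v, a, t⟩ := q
    have h1 : (fun j : {j : Fin K // j ≠ k} => recomb K L k a x j.1) = x := by
      funext j
      exact dif_neg j.2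
    have h2 : recomb K L k a x k = a := dif_pos rfl
    show ((fun j : {j : Fin K // j ≠ k} => recomb K L k a x j.1),
      (v, recomb K L k a x k,
        fun m => (t m + hfun K N L v (recomb K L k a x) m)
          + hfun K N L v (recomb K L k a x) m)) = (x, v, a, t)
    have h3 : (fun m => (t m + hfun K N L v (recomb K L k a x) m)
        + hfun K N L v (recomb K L k a x) m) = t := by
      funext m
      rw [add_assoc, addSelf, add_zero]
    rw [h1, h2, h3]

lemma pU_sum : ∑ ω : OmT K N L, pU K N L ω = 1 := by
  unfold pU
  rw [Finset.sum_const, Finset.card_univ, nsmul_eq_mul, mul_inv_cancel₀]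
  exact Nat.cast_ne_zero.mpr Fintype.card_ne_zero

lemma probW (k : Fin K) (a : Fin L → ZMod 2) :
    prob (pU K N L) (fun ω => ω.1 k) a = ((Fintype.card (Fin L → ZMod 2) : ℝ))⁻¹ :=
  SPIRAux.prob_fst (eW K N L k) _ (fun _ => rfl) a

lemma probS (a : STy N L) :
    prob (pU K N L) (fun ω : OmT K N L => ω.2.1) a
      = ((Fintype.card (STy N L) : ℝ))⁻¹ :=
  SPIRAux.prob_fst (eS K N L) _ (fun _ => rfl) a

lemma probF (a : VTy K L) :
    prob (pU K N L) (fun ω : OmT K N L => ω.2.2) a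
      = ((Fintype.card (VTy K L) : ℝ))⁻¹ :=
  SPIRAux.prob_fst (eF K N L) _ (fun _ => rfl) a

end Equivs

end SPIRC


open SPIRC

/-- (Achievability of finite-length SPIR capacity.) For all `K ≥ 2`,
`N ≥ 2` and every finite message length `L ≥ 1`, there exists a zero-error SPIR scheme with
messages of exactly `L` bits, total download `D = ⌈L·N/(N−1)⌉` bits, and common randomness
entropy `H(S) = ⌈L/(N−1)⌉` bits; hence the rate `L/⌈L/(1 − 1/N)⌉` is achievable with zero
error at finite length `L`. -/
theorem finite_length_spir_achievability (K N L : ℕ) (hK : 2 ≤ K) (hN : 2 ≤ N)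
    (hL : 1 ≤ L) :
    ∃ (d : Fin N → ℕ) (sch : FinLenSPIR K N L d),
      (∑ n, d n) = ⌈(L : ℚ) * N / ((N : ℚ) - 1)⌉₊ ∧
      ent sch.p sch.S = (⌈(L : ℚ) / ((N : ℚ) - 1)⌉₊ : ℝ) := by
  have hNm : 0 < N - 1 := by omega
  -- index bounds for the decoding function
  have pfm : ∀ ℓ : Fin L, ℓ.val % (N - 1) < N :=
    fun ℓ => lt_of_lt_of_le (Nat.mod_lt _ hNm) (by omega)
  have pfN : N - 1 < N := by omega
  have pfsrv : ∀ ℓ : Fin L, ℓ.val / (N - 1) < dfun N L ⟨ℓ.val % (N - 1), pfm ℓ⟩ := by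
    intro ℓ
    have hmlt := Nat.mod_lt ℓ.val (show 0 < N - 1 by omega)
    unfold dfun
    rw [if_neg (by simpa using (by omega : ℓ.val % (N - 1) ≠ N - 1))]
    rw [klt N L hN]
    have hd := Nat.div_add_mod ℓ.val (N - 1)
    have hℓ : ℓ.val < L := ℓ.isLt
    show ℓ.val / (N - 1) * (N - 1) + ℓ.val % (N - 1) < L
    rw [mul_comm]
    omega
  have pfref : ∀ ℓ : Fin L, ℓ.val / (N - 1) < dfun N L ⟨N - 1, pfN⟩ := by
    intro ℓ
    unfold dfun
    rw [if_pos rfl]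
    rw [Nat.div_lt_iff_lt_mul hNm]
    have h2 := L_le_mul N L hN
    have hℓ : ℓ.val < L := ℓ.isLt
    omega
  refine ⟨dfun N L,
    { Ω := OmT K N L
      p := pU K N L
      𝓢 := STy N L
      𝓕 := VTy K L
      𝓠 := fun _ => VTy K L
      W := fun k ω => ω.1 k
      S := fun ω => ω.2.1
      F := fun ω => ω.2.2
      Q := fun k n ω => ω.2.2 + sh K N L k n
      A := fun k n ω => ansF K N L n (ω.2.2 + sh K N L k n) ω.1 ω.2.1
      p_nonneg := fun ω => by unfold pU; positivity
      p_sum := pU_sum K N L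
      hWunif := by
        intro k a
        rw [probW K N L k a, one_div]
      hIndep := by
        intro w sv fv
        have hL1 : prob (pU K N L)
            (fun ω : OmT K N L => ((fun k => ω.1 k), ω.2.1, ω.2.2)) (w, sv, fv)
            = ((Fintype.card (OmT K N L) : ℝ))⁻¹ :=
          SPIRAux.prob_equiv (Equiv.refl (OmT K N L)) _ (fun _ => rfl) (w, sv, fv)
        rw [hL1]
        have hR : ∀ k : Fin K, prob (pU K N L) (fun ω : OmT K N L => ω.1 k) (w k)
            = ((Fintype.card (Fin L → ZMod 2) : ℝ))⁻¹ := fun k => probW K N L k (w k)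
        rw [Finset.prod_congr rfl (fun k _ => hR k), probS K N L sv, probF K N L fv]
        rw [Finset.prod_const, Finset.card_univ, Fintype.card_fin]
        have hc : (Fintype.card (OmT K N L) : ℝ)
            = (Fintype.card (Fin L → ZMod 2) : ℝ) ^ K
              * ((Fintype.card (STy N L) : ℝ) * (Fintype.card (VTy K L) : ℝ)) := by
          rw [show Fintype.card (OmT K N L)
              = Fintype.card (WTy K L) * (Fintype.card (STy N L) * Fintype.card (VTy K L)) by
            rw [Fintype.card_prod, Fintype.card_prod]]
          rw [show Fintype.card (WTy K L) = Fintype.card (Fin L → ZMod 2) ^ K by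
            rw [Fintype.card_fun, Fintype.card_fin]]
          push_cast
          ring
        rw [hc, mul_inv, mul_inv, inv_pow]
        ring
      hQ := fun k n => ⟨fun f => f + sh K N L k n, fun _ => rfl⟩
      hA := fun k n => ⟨ansF K N L n, fun _ => rfl⟩
      hCorrect := by
        intro k
        refine ⟨fun a _ ℓ => a ⟨ℓ.val % (N - 1), pfm ℓ⟩ ⟨ℓ.val / (N - 1), pfsrv ℓ⟩
          + a ⟨N - 1, pfN⟩ ⟨ℓ.val / (N - 1), pfref ℓ⟩, fun ω => ?_⟩
        funext ℓ
        show ω.1 k ℓ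
          = ansF K N L ⟨ℓ.val % (N - 1), pfm ℓ⟩ (ω.2.2 + sh K N L k ⟨ℓ.val % (N - 1), pfm ℓ⟩)
              ω.1 ω.2.1 ⟨ℓ.val / (N - 1), pfsrv ℓ⟩
            + ansF K N L ⟨N - 1, pfN⟩ (ω.2.2 + sh K N L k ⟨N - 1, pfN⟩)
              ω.1 ω.2.1 ⟨ℓ.val / (N - 1), pfref ℓ⟩
        unfold ansF
        rw [hfun_add, hfun_add, hfun_sh, hfun_sh]
        have hmlt := Nat.mod_lt ℓ.val (show 0 < N - 1 by omega)
        have hd := Nat.div_add_mod ℓ.val (N - 1)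
        have hℓ : ℓ.val < L := ℓ.isLt
        have hpos : (ℓ.val / (N - 1)) * (N - 1) + ℓ.val % (N - 1) < L := by
          rw [mul_comm]; omega
        rw [dlt_pos N L _ _ _ (by simpa using hmlt) hpos]
        rw [dlt_ref N L hN ⟨N - 1, pfN⟩ rfl]
        have hfin : (⟨(ℓ.val / (N - 1)) * (N - 1) + ℓ.val % (N - 1), hpos⟩ : Fin L) = ℓ := by
          apply Fin.ext
          show (ℓ.val / (N - 1)) * (N - 1) + ℓ.val % (N - 1) = ℓ.val
          rw [mul_comm]
          omega
        rw [hfin]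
        exact (zfin (ω.1 k ℓ) _ _).symm
      hUserPriv := by
        intro n k k'
        have hinv : ∀ v : VTy K L,
            (v + (sh K N L k n + sh K N L k' n)) + (sh K N L k n + sh K N L k' n) = v := by
          intro v
          funext ℓ j
          show (v ℓ j + _) + _ = v ℓ j
          rw [add_assoc, addSelf, add_zero]
        refine SPIRAux.identDist_comp (pU K N L)
          ⟨fun ω => (ω.1, ω.2.1, ω.2.2 + (sh K N L k n + sh K N L k' n)),
           fun ω => (ω.1, ω.2.1, ω.2.2 + (sh K N L k n + sh K N L k' n)),
           fun ω => by
             show (ω.1, ω.2.1, (ω.2.2 + (sh K N L k n + sh K N L k' n))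
               + (sh K N L k n + sh K N L k' n)) = ω
             rw [hinv],
           fun ω => by
             show (ω.1, ω.2.1, (ω.2.2 + (sh K N L k n + sh K N L k' n))
               + (sh K N L k n + sh K N L k' n)) = ω
             rw [hinv]⟩
          (fun _ => rfl) _ _ ?_
        intro ω
        have hq : (ω.2.2 + (sh K N L k n + sh K N L k' n)) + sh K N L k n
            = ω.2.2 + sh K N L k' n := by
          funext ℓ j
          exact zswap (ω.2.2 ℓ j) (sh K N L k n ℓ j) (sh K N L k' n ℓ j)
        show ((ω.2.2 + (sh K N L k n + sh K N L k' n)) + sh K N L k n,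
          ansF K N L n ((ω.2.2 + (sh K N L k n + sh K N L k' n)) + sh K N L k n) ω.1 ω.2.1,
          (fun j => ω.1 j), ω.2.1)
          = (ω.2.2 + sh K N L k' n,
            ansF K N L n (ω.2.2 + sh K N L k' n) ω.1 ω.2.1, (fun j => ω.1 j), ω.2.1)
        rw [hq]
      hDBPriv := by
        intro k
        have hfactZ : ∀ (x : {j : Fin K // j ≠ k} → Fin L → ZMod 2)
            (z : VTy K L × (Fin L → ZMod 2) × STy N L),
            prob (pU K N L) (fun ω : OmT K N L => ((fun j => ω.1 j.1),
              (ω.2.2, ω.1 k, fun m => ω.2.1 m + hfun K N L ω.2.2 ω.1 m))) (x, z)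
            = prob (pU K N L) (fun ω : OmT K N L => (fun j => ω.1 j.1)) x
              * prob (pU K N L) (fun ω : OmT K N L =>
                  (ω.2.2, ω.1 k, fun m => ω.2.1 m + hfun K N L ω.2.2 ω.1 m)) z := by
          intro x z
          unfold pU
          rw [SPIRAux.prob_equiv (eZ K N L k)
            (fun ω : OmT K N L => ((fun j : {j : Fin K // j ≠ k} => ω.1 j.1),
              (ω.2.2, ω.1 k, fun m => ω.2.1 m + hfun K N L ω.2.2 ω.1 m)))
            (fun _ => rfl) (x, z)]
          rw [SPIRAux.prob_fst (eZ K N L k)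
            (fun ω : OmT K N L => (fun j : {j : Fin K // j ≠ k} => ω.1 j.1))
            (fun _ => rfl) x]
          rw [SPIRAux.prob_fst ((eZ K N L k).trans (Equiv.prodComm _ _))
            (fun ω : OmT K N L =>
              (ω.2.2, ω.1 k, fun m => ω.2.1 m + hfun K N L ω.2.2 ω.1 m))
            (fun _ => rfl) z]
          have hc : (Fintype.card (OmT K N L) : ℝ)
              = (Fintype.card ({j : Fin K // j ≠ k} → Fin L → ZMod 2) : ℝ)
                * (Fintype.card (VTy K L × (Fin L → ZMod 2) × STy N L) : ℝ) := by
            rw [show Fintype.card (OmT K N L)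
                = Fintype.card ({j : Fin K // j ≠ k} → Fin L → ZMod 2)
                  * Fintype.card (VTy K L × (Fin L → ZMod 2) × STy N L) by
              rw [Fintype.card_congr (eZ K N L k), Fintype.card_prod]]
            push_cast
            ring
          rw [hc, mul_inv]
        have hfact := fun x y => SPIRAux.indep_map (pU K N L)
          (fun ω : OmT K N L => (fun j : {j : Fin K // j ≠ k} => ω.1 j.1))
          (fun ω : OmT K N L =>
            (ω.2.2, ω.1 k, fun m => ω.2.1 m + hfun K N L ω.2.2 ω.1 m))
          (fun z => ((fun n => z.1 + sh K N L k n),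
            (fun n (i : Fin (dfun N L n)) =>
              z.2.2 ⟨i.val, lt_of_lt_of_le i.isLt (dfun_le_M N L n)⟩
                + dlt N L n ⟨i.val, lt_of_lt_of_le i.isLt (dfun_le_M N L n)⟩ z.2.1), z.1))
          hfactZ x y
        have hYeq : (fun ω : OmT K N L => ((fun n => ω.2.2 + sh K N L k n),
            (fun n => ansF K N L n (ω.2.2 + sh K N L k n) ω.1 ω.2.1), ω.2.2))
            = fun ω : OmT K N L =>
              ((fun z : VTy K L × (Fin L → ZMod 2) × STy N L =>
                ((fun n => z.1 + sh K N L k n),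
                 (fun n (i : Fin (dfun N L n)) =>
                   z.2.2 ⟨i.val, lt_of_lt_of_le i.isLt (dfun_le_M N L n)⟩
                     + dlt N L n ⟨i.val, lt_of_lt_of_le i.isLt (dfun_le_M N L n)⟩ z.2.1), z.1))
                ((ω.2.2, ω.1 k, fun m => ω.2.1 m + hfun K N L ω.2.2 ω.1 m))) := by
          funext ω
          have hA : (fun n => ansF K N L n (ω.2.2 + sh K N L k n) ω.1 ω.2.1)
              = fun n (i : Fin (dfun N L n)) =>
                (ω.2.1 ⟨i.val, lt_of_lt_of_le i.isLt (dfun_le_M N L n)⟩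
                  + hfun K N L ω.2.2 ω.1 ⟨i.val, lt_of_lt_of_le i.isLt (dfun_le_M N L n)⟩)
                  + dlt N L n ⟨i.val, lt_of_lt_of_le i.isLt (dfun_le_M N L n)⟩ (ω.1 k) := by
            funext n i
            show ω.2.1 _ + hfun K N L (ω.2.2 + sh K N L k n) ω.1 _ = _
            rw [hfun_add, hfun_sh, ← add_assoc]
          rw [hA]
        rw [show (fun ω : OmT K N L => ((fun n => ω.2.2 + sh K N L k n),
            (fun n => ansF K N L n (ω.2.2 + sh K N L k n) ω.1 ω.2.1), ω.2.2))
            = _ from hYeq]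
        exact SPIRAux.mutInfo_eq_zero (pU K N L) (pU_sum K N L) _ _ hfact }, ?_, ?_⟩
  · rw [sum_dfun N L hN, ceil_LN_div N L hN]
  · rw [ceil_L_div N L hN]
    have hU : Unif (pU K N L) (fun ω : OmT K N L => ω.2.1) := by
      intro a
      rw [probS K N L a, one_div]
    rw [SPIRAux.ent_unif (pU K N L) _ hU]
    have hcS : Fintype.card (STy N L) = 2 ^ Mr N L := by
      rw [Fintype.card_fun, ZMod.card, Fintype.card_fin]
    rw [hcS]
    push_cast
    rw [Real.logb_pow, Real.logb_self_eq_one (by norm_num), mul_one]
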